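/- For every integer w ≥ 1 and all indices 1 ≤ i < k ≤ k′ ≤ j ≤ n−1, it holds that C_k(i,j,w) + C_{k′}(i,j+1,w) ≤ C_k(i,j+1,w) + C_{k′}(i,j,w), where C_k(i,j,w) = c(i,j) + C(i,k−1,w) + C(k,j,w−1). -/

import Mathlib

open scoped ENNReal NNReal BigOperators

namespace SplitCostQuadrangleAux

variable (n : ℕ) (p : ℕ → ℝ≥0) (C : ℕ → ℕ → ℕ → ℝ≥0∞)

/-- `c i j = p_i + ⋯ + p_j` in `ℝ≥0∞`. -/
noncomputable def c (i j : ℕ) : ℝ≥0∞ := ∑ m ∈ Finset.Icc i j, (p m : ℝ≥0∞)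

lemma c_split {a b d : ℕ} (h1 : 1 ≤ a) (h2 : a ≤ b + 1) (h3 : b ≤ d) :
    c p a b + c p (b + 1) d = c p a d := by
  unfold c
  have ha : a = (a - 1) + 1 := by omega
  rw [ha, Finset.Icc_add_one_left_eq_Ioc, Finset.Icc_add_one_left_eq_Ioc, Finset.Icc_add_one_left_eq_Ioc]
  exact Finset.sum_Ioc_consecutive _ (show a - 1 ≤ b by omega) h3

lemma c_mono {a a' b b' : ℕ} (h1 : a' ≤ a) (h2 : b ≤ b') : c p a b ≤ c p a' b' :=
  Finset.sum_le_sum_of_subset (Finset.Icc_subset_Icc h1 h2)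

lemma le_split
    (hrec : ∀ i j w : ℕ, 1 ≤ i → i < j → j ≤ n → 1 ≤ w →
      C i j w = c p i j + ⨅ k ∈ Finset.Ioc i j, (C i (k - 1) w + C k j (w - 1)))
    {i j w k : ℕ} (h1 : 1 ≤ i) (hij : i < j) (hjn : j ≤ n) (hw : 1 ≤ w)
    (hik : i < k) (hkj : k ≤ j) :
    C i j w ≤ c p i j + (C i (k - 1) w + C k j (w - 1)) := by
  rw [hrec i j w h1 hij hjn hw]
  exact add_le_add_right (iInf₂_le k (Finset.mem_Ioc.mpr ⟨hik, hkj⟩)) _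

lemma exists_split
    (hrec : ∀ i j w : ℕ, 1 ≤ i → i < j → j ≤ n → 1 ≤ w →
      C i j w = c p i j + ⨅ k ∈ Finset.Ioc i j, (C i (k - 1) w + C k j (w - 1)))
    {i j w : ℕ} (h1 : 1 ≤ i) (hij : i < j) (hjn : j ≤ n) (hw : 1 ≤ w) :
    ∃ k, i < k ∧ k ≤ j ∧ C i j w = c p i j + (C i (k - 1) w + C k j (w - 1)) := by
  obtain ⟨k, hk, he⟩ := Finset.exists_mem_eq_inf (Finset.Ioc i j)
    ⟨j, Finset.mem_Ioc.mpr ⟨hij, le_rfl⟩⟩ (fun k => C i (k - 1) w + C k j (w - 1))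
  rw [Finset.mem_Ioc] at hk
  refine ⟨k, hk.1, hk.2, ?_⟩
  rw [hrec i j w h1 hij hjn hw, ← Finset.inf_eq_iInf, he]

/-- Monotonicity in `w`: allowing one more split cannot increase the cost. -/
lemma mono
    (hdiag : ∀ i w : ℕ, 1 ≤ i → i ≤ n → C i i w = 0)
    (hzero : ∀ i j : ℕ, 1 ≤ i → i < j → j ≤ n → C i j 0 = ⊤)
    (hrec : ∀ i j w : ℕ, 1 ≤ i → i < j → j ≤ n → 1 ≤ w →
      C i j w = c p i j + ⨅ k ∈ Finset.Ioc i j, (C i (k - 1) w + C k j (w - 1)))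
    : ∀ w d i j, j - i ≤ d → 1 ≤ i → i ≤ j → j ≤ n → C i j (w + 1) ≤ C i j w := by
  intro w
  induction w using Nat.strong_induction_on with
  | _ w ihw =>
  intro d
  induction d using Nat.strong_induction_on with
  | _ d ihd =>
  intro i j hd h1 hij hjn
  rcases eq_or_lt_of_le hij with rfl | hij'
  · rw [hdiag i (w + 1) h1 hjn, hdiag i w h1 hjn]
  rcases Nat.eq_zero_or_pos w with rfl | hw
  · rw [hzero i j h1 hij' hjn]; exact le_top
  rw [hrec i j (w + 1) h1 hij' hjn (by omega), hrec i j w h1 hij' hjn hw]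
  refine add_le_add_right (iInf₂_mono fun k hk => ?_) _
  rw [Finset.mem_Ioc] at hk
  have e1 : C i (k - 1) (w + 1) ≤ C i (k - 1) w :=
    ihd ((k - 1) - i) (by omega) i (k - 1) le_rfl h1 (by omega) (by omega)
  have e2 : C k j w ≤ C k j (w - 1) := by
    have := ihw (w - 1) (by omega) (j - k) k j le_rfl (by omega) hk.2 hjn
    rwa [Nat.sub_add_cancel hw] at this
  simpa using add_le_add e1 e2

/-- Triangle inequality: `C(i,j,w) + C(j,j',w) ≤ C(i,j',w)`. -/
lemma tri
    (hdiag : ∀ i w : ℕ, 1 ≤ i → i ≤ n → C i i w = 0)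
    (hzero : ∀ i j : ℕ, 1 ≤ i → i < j → j ≤ n → C i j 0 = ⊤)
    (hrec : ∀ i j w : ℕ, 1 ≤ i → i < j → j ≤ n → 1 ≤ w →
      C i j w = c p i j + ⨅ k ∈ Finset.Ioc i j, (C i (k - 1) w + C k j (w - 1)))
    : ∀ w d i j j', j' - i ≤ d → 1 ≤ i → i ≤ j → j ≤ j' → j' ≤ n →
    C i j w + C j j' w ≤ C i j' w := by
  intro w
  induction w using Nat.strong_induction_on with
  | _ w ihw =>
  intro d
  induction d using Nat.strong_induction_on with
  | _ d ihd =>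
  intro i j j' hd h1 hij hjj hjn
  rcases eq_or_lt_of_le hij with rfl | hij'
  · rw [hdiag i w h1 (le_trans hjj hjn), zero_add]
  rcases eq_or_lt_of_le hjj with rfl | hjj'
  · rw [hdiag j w (by omega) hjn, add_zero]
  rcases Nat.eq_zero_or_pos w with rfl | hw
  · rw [hzero i j' h1 (by omega) hjn]; exact le_top
  obtain ⟨y, hy1, hy2, hyE⟩ := exists_split n p C hrec h1 (show i < j' by omega) hjn hw
  rcases le_or_gt y j with hyj | hyj
  · have hb : C i j w ≤ c p i j + (C i (y - 1) w + C y j (w - 1)) :=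
      le_split n p C hrec h1 hij' (by omega) hw hy1 hyj
    have htri : C y j (w - 1) + C j j' (w - 1) ≤ C y j' (w - 1) :=
      ihw (w - 1) (by omega) (j' - y) y j j' le_rfl (by omega) hyj hjj'.le hjn
    have hmono : C j j' w ≤ C j j' (w - 1) := by
      have := mono n p C hdiag hzero hrec (w - 1) (j' - j) j j' le_rfl (by omega) hjj'.le hjn
      rwa [Nat.sub_add_cancel hw] at this
    calc C i j w + C j j' w
        ≤ (c p i j + (C i (y - 1) w + C y j (w - 1))) + C j j' (w - 1) :=
          add_le_add hb hmono
      _ = c p i j + C i (y - 1) w + (C y j (w - 1) + C j j' (w - 1)) := by ring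
      _ ≤ c p i j + C i (y - 1) w + C y j' (w - 1) := add_le_add_right htri _
      _ ≤ c p i j' + C i (y - 1) w + C y j' (w - 1) := by
          exact add_le_add (add_le_add (c_mono p le_rfl hjj'.le) le_rfl) le_rfl
      _ = c p i j' + (C i (y - 1) w + C y j' (w - 1)) := by ring
      _ = C i j' w := hyE.symm
  · have hb : C j j' w ≤ c p j j' + (C j (y - 1) w + C y j' (w - 1)) :=
      le_split n p C hrec (by omega) hjj' hjn hw hyj hy2
    have htri : C i j w + C j (y - 1) w ≤ C i (y - 1) w :=
      ihd ((y - 1) - i) (by omega) i j (y - 1) le_rfl h1 hij (by omega) (by omega)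
    calc C i j w + C j j' w
        ≤ C i j w + (c p j j' + (C j (y - 1) w + C y j' (w - 1))) := add_le_add le_rfl hb
      _ = c p j j' + ((C i j w + C j (y - 1) w) + C y j' (w - 1)) := by ring
      _ ≤ c p j j' + (C i (y - 1) w + C y j' (w - 1)) :=
          add_le_add_right (add_le_add htri le_rfl) _
      _ ≤ c p i j' + (C i (y - 1) w + C y j' (w - 1)) :=
          add_le_add (c_mono p hij'.le le_rfl) le_rfl
      _ = C i j' w := hyE.symm

/-- Quadrangle inequality for `C` at a fixed `w`. -/
lemma qi
    (hdiag : ∀ i w : ℕ, 1 ≤ i → i ≤ n → C i i w = 0)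
    (hzero : ∀ i j : ℕ, 1 ≤ i → i < j → j ≤ n → C i j 0 = ⊤)
    (hrec : ∀ i j w : ℕ, 1 ≤ i → i < j → j ≤ n → 1 ≤ w →
      C i j w = c p i j + ⨅ k ∈ Finset.Ioc i j, (C i (k - 1) w + C k j (w - 1)))
    : ∀ w d i i' j j', j' - i ≤ d → 1 ≤ i → i ≤ i' → i' ≤ j → j ≤ j' → j' ≤ n →
    C i j w + C i' j' w ≤ C i j' w + C i' j w := by
  intro w
  induction w using Nat.strong_induction_on with
  | _ w ihw =>
  intro d
  induction d using Nat.strong_induction_on with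
  | _ d ihd =>
  intro i i' j j' hd h1 hii hij hjj hjn
  rcases eq_or_lt_of_le hii with rfl | hii'
  · exact le_of_eq (add_comm _ _)
  rcases eq_or_lt_of_le hjj with rfl | hjj'
  · exact le_rfl
  rcases eq_or_lt_of_le hij with rfl | hij'
  · -- i' = j : triangle case
    rw [hdiag i' w (by omega) (by omega), add_zero]
    exact tri n p C hdiag hzero hrec w (j' - i) i i' j' le_rfl h1 hii'.le hjj'.le hjn
  rcases Nat.eq_zero_or_pos w with rfl | hw
  · rw [hzero i j' h1 (by omega) hjn, top_add]; exact le_top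
  obtain ⟨y, hy1, hy2, hyE⟩ := exists_split n p C hrec h1 (show i < j' by omega) hjn hw
  obtain ⟨z, hz1, hz2, hzE⟩ := exists_split n p C hrec (show 1 ≤ i' by omega) hij' (by omega) hw
  have hi'1 : i' - 1 + 1 = i' := by omega
  have e1 : c p i (i' - 1) + c p i' j = c p i j := by
    have := c_split p h1 (show i ≤ (i' - 1) + 1 by omega) (show i' - 1 ≤ j by omega)
    rwa [hi'1] at this
  have e2 : c p i (i' - 1) + c p i' j' = c p i j' := by
    have := c_split p h1 (show i ≤ (i' - 1) + 1 by omega) (show i' - 1 ≤ j' by omega)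
    rwa [hi'1] at this
  have hcc : c p i j + c p i' j' = c p i j' + c p i' j := by
    rw [← e1, ← e2]; ring
  rcases le_total z y with hzy | hyz
  · -- z ≤ y : use split z for (i,j), split y for (i',j')
    have hb1 : C i j w ≤ c p i j + (C i (z - 1) w + C z j (w - 1)) :=
      le_split n p C hrec h1 (by omega) (by omega) hw (by omega) hz2
    have hb2 : C i' j' w ≤ c p i' j' + (C i' (y - 1) w + C y j' (w - 1)) :=
      le_split n p C hrec (by omega) (by omega) hjn hw (by omega) hy2
    have hq : C i (z - 1) w + C i' (y - 1) w ≤ C i (y - 1) w + C i' (z - 1) w :=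
      ihd ((y - 1) - i) (by omega) i i' (z - 1) (y - 1) le_rfl h1 hii'.le
        (by omega) (by omega) (by omega)
    calc C i j w + C i' j' w
        ≤ (c p i j + (C i (z - 1) w + C z j (w - 1))) +
          (c p i' j' + (C i' (y - 1) w + C y j' (w - 1))) := add_le_add hb1 hb2
      _ = (c p i j + c p i' j') +
          ((C i (z - 1) w + C i' (y - 1) w) + (C z j (w - 1) + C y j' (w - 1))) := by ring
      _ ≤ (c p i j + c p i' j') +
          ((C i (y - 1) w + C i' (z - 1) w) + (C z j (w - 1) + C y j' (w - 1))) :=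
          add_le_add_right (add_le_add hq le_rfl) _
      _ = (c p i j' + c p i' j) +
          ((C i (y - 1) w + C i' (z - 1) w) + (C z j (w - 1) + C y j' (w - 1))) := by rw [hcc]
      _ = (c p i j' + (C i (y - 1) w + C y j' (w - 1))) +
          (c p i' j + (C i' (z - 1) w + C z j (w - 1))) := by ring
      _ = C i j' w + C i' j w := by rw [hyE, hzE]
  · -- y ≤ z : use split y for (i,j), split z for (i',j')
    have hb1 : C i j w ≤ c p i j + (C i (y - 1) w + C y j (w - 1)) :=
      le_split n p C hrec h1 (by omega) (by omega) hw hy1 (by omega)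
    have hb2 : C i' j' w ≤ c p i' j' + (C i' (z - 1) w + C z j' (w - 1)) :=
      le_split n p C hrec (by omega) (by omega) hjn hw hz1 (by omega)
    have hq : C y j (w - 1) + C z j' (w - 1) ≤ C y j' (w - 1) + C z j (w - 1) :=
      ihw (w - 1) (by omega) (j' - y) y z j j' le_rfl (by omega) hyz hz2 hjj'.le hjn
    calc C i j w + C i' j' w
        ≤ (c p i j + (C i (y - 1) w + C y j (w - 1))) +
          (c p i' j' + (C i' (z - 1) w + C z j' (w - 1))) := add_le_add hb1 hb2
      _ = (c p i j + c p i' j') +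
          ((C i (y - 1) w + C i' (z - 1) w) + (C y j (w - 1) + C z j' (w - 1))) := by ring
      _ ≤ (c p i j + c p i' j') +
          ((C i (y - 1) w + C i' (z - 1) w) + (C y j' (w - 1) + C z j (w - 1))) :=
          add_le_add_right (add_le_add le_rfl hq) _
      _ = (c p i j' + c p i' j) +
          ((C i (y - 1) w + C i' (z - 1) w) + (C y j' (w - 1) + C z j (w - 1))) := by rw [hcc]
      _ = (c p i j' + (C i (y - 1) w + C y j' (w - 1))) +
          (c p i' j + (C i' (z - 1) w + C z j (w - 1))) := by ring
      _ = C i j' w + C i' j w := by rw [hyE, hzE]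

end SplitCostQuadrangleAux

/-- **Key inequality (eq. (17) in the paper).** For every `w ≥ 1` and all
`1 ≤ i < k ≤ k' ≤ j ≤ n - 1`, it holds that
`C_k(i,j,w) + C_{k'}(i,j+1,w) ≤ C_k(i,j+1,w) + C_{k'}(i,j,w)`,
where `C_k(i,j,w) = c(i,j) + C(i,k-1,w) + C(k,j,w-1)` and `c(i,j) = p_i + ⋯ + p_j`.
Here `C(i,i,w) = 0`, `C(i,j,0) = ∞` for `i < j`, and for `i < j`, `w ≥ 1`,
`C(i,j,w) = c(i,j) + min_{i < k ≤ j} (C(i,k-1,w) + C(k,j,w-1))`. -/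
theorem split_cost_quadrangle
    (n : ℕ) (p : ℕ → ℝ≥0)
    (C : ℕ → ℕ → ℕ → ℝ≥0∞)
    (hdiag : ∀ i w : ℕ, 1 ≤ i → i ≤ n → C i i w = 0)
    (hzero : ∀ i j : ℕ, 1 ≤ i → i < j → j ≤ n → C i j 0 = ⊤)
    (hrec : ∀ i j w : ℕ, 1 ≤ i → i < j → j ≤ n → 1 ≤ w →
      C i j w = (∑ k ∈ Finset.Icc i j, (p k : ℝ≥0∞)) +
        ⨅ k ∈ Finset.Ioc i j, (C i (k - 1) w + C k j (w - 1))) :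
    ∀ w : ℕ, 1 ≤ w → ∀ i k k' j : ℕ, 1 ≤ i → i < k → k ≤ k' → k' ≤ j → j + 1 ≤ n →
      (((∑ m ∈ Finset.Icc i j, (p m : ℝ≥0∞)) + C i (k - 1) w + C k j (w - 1)) +
       ((∑ m ∈ Finset.Icc i (j + 1), (p m : ℝ≥0∞)) + C i (k' - 1) w + C k' (j + 1) (w - 1)))
      ≤
      (((∑ m ∈ Finset.Icc i (j + 1), (p m : ℝ≥0∞)) + C i (k - 1) w + C k (j + 1) (w - 1)) +
       ((∑ m ∈ Finset.Icc i j, (p m : ℝ≥0∞)) + C i (k' - 1) w + C k' j (w - 1))) := by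
  intro w hw i k k' j h1 hik hkk' hk'j hjn
  have hrec' : ∀ i j w : ℕ, 1 ≤ i → i < j → j ≤ n → 1 ≤ w →
      C i j w = SplitCostQuadrangleAux.c p i j +
        ⨅ k ∈ Finset.Ioc i j, (C i (k - 1) w + C k j (w - 1)) := hrec
  have hq : C k j (w - 1) + C k' (j + 1) (w - 1) ≤ C k (j + 1) (w - 1) + C k' j (w - 1) :=
    SplitCostQuadrangleAux.qi n p C hdiag hzero hrec' (w - 1) ((j + 1) - k) k k' j (j + 1)
      le_rfl (by omega) hkk' hk'j (by omega) hjn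
  calc (((∑ m ∈ Finset.Icc i j, (p m : ℝ≥0∞)) + C i (k - 1) w + C k j (w - 1)) +
       ((∑ m ∈ Finset.Icc i (j + 1), (p m : ℝ≥0∞)) + C i (k' - 1) w + C k' (j + 1) (w - 1)))
      = ((∑ m ∈ Finset.Icc i j, (p m : ℝ≥0∞)) + (∑ m ∈ Finset.Icc i (j + 1), (p m : ℝ≥0∞)) +
          C i (k - 1) w + C i (k' - 1) w) + (C k j (w - 1) + C k' (j + 1) (w - 1)) := by ring
    _ ≤ ((∑ m ∈ Finset.Icc i j, (p m : ℝ≥0∞)) + (∑ m ∈ Finset.Icc i (j + 1), (p m : ℝ≥0∞)) +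
          C i (k - 1) w + C i (k' - 1) w) + (C k (j + 1) (w - 1) + C k' j (w - 1)) :=
        add_le_add_right hq _
    _ = (((∑ m ∈ Finset.Icc i (j + 1), (p m : ℝ≥0∞)) + C i (k - 1) w + C k (j + 1) (w - 1)) +
       ((∑ m ∈ Finset.Icc i j, (p m : ℝ≥0∞)) + C i (k' - 1) w + C k' j (w - 1))) := by ring
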